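/- arXiv:1411.2876 — 6 statements merged into one kernel-verified Lean document; each statement's English description precedes it below -/
import Mathlib

section
/- Let p ∈ [1,2] and define α_i = (1/a)((i+p)/p)^{p-1} for i ≥ 0 with a ≥ 1. Then A_k := Σ_{i=0}^k α_i ≥ (1/a)((k+p)/p)^p for every integer k ≥ 0. -/
lemma key_ineq {p u v : ℝ} (hp1 : 1 ≤ p) (hu : 0 ≤ u) (huv : u ≤ v) (hv : 0 < v) :
    v ^ p - u ^ p ≤ p * v ^ (p - 1) * (v - u) := by
  have hs : (-1 : ℝ) ≤ u / v - 1 := by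
    have : 0 ≤ u / v := div_nonneg hu hv.le
    linarith
  have hb := one_add_mul_self_le_rpow_one_add hs hp1
  rw [add_sub_cancel] at hb
  have hdiv : (u / v) ^ p = u ^ p / v ^ p := Real.div_rpow hu hv.le p
  rw [hdiv] at hb
  have hvp : 0 < v ^ p := Real.rpow_pos_of_pos hv p
  have h2 : (1 + p * (u / v - 1)) * v ^ p ≤ u ^ p := by
    calc (1 + p * (u / v - 1)) * v ^ p ≤ (u ^ p / v ^ p) * v ^ p := by
          exact mul_le_mul_of_nonneg_right hb hvp.le
      _ = u ^ p := div_mul_cancel₀ _ hvp.ne'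
  have hvsplit : v ^ p = v ^ (p - 1) * v := by
    rw [← Real.rpow_add_one hv.ne' (p - 1)]; ring_nf
  have h3 : (u / v - 1) * v = u - v := by field_simp
  have h4 : p * (u / v - 1) * v ^ p = p * v ^ (p - 1) * (u - v) := by
    rw [hvsplit, ← h3]; ring
  have h2' : v ^ p + p * v ^ (p - 1) * (u - v) ≤ u ^ p := by
    calc v ^ p + p * v ^ (p - 1) * (u - v) = (1 + p * (u / v - 1)) * v ^ p := by
          rw [← h4]; ring
      _ ≤ u ^ p := h2
  linarith

open Finset in
/-- With `α_i = (1/a)((i+p)/p)^(p-1)`, `p ∈ [1,2]`, `a ≥ 1`, the partial sums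
`A_k = Σ_{i=0}^k α_i` satisfy `A_k ≥ (1/a)((k+p)/p)^p`. -/
theorem stmt_4 (p a : ℝ) (hp1 : 1 ≤ p) (hp2 : p ≤ 2) (ha : 1 ≤ a)
    (α : ℕ → ℝ) (hα : ∀ i, α i = (1 / a) * (((i : ℝ) + p) / p) ^ (p - 1))
    (A : ℕ → ℝ) (hA : ∀ k, A k = ∑ i ∈ range (k + 1), α i) :
    ∀ k : ℕ, A k ≥ (1 / a) * (((k : ℝ) + p) / p) ^ p := by
  have hp0 : 0 < p := lt_of_lt_of_le one_pos hp1
  have ha0 : 0 < a := lt_of_lt_of_le one_pos ha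
  intro k
  induction k with
  | zero =>
    simp only [hA, hα, Finset.sum_range_one]
    norm_num
    rw [div_self hp0.ne', Real.one_rpow, Real.one_rpow]
  | succ k ih =>
    have hstep : A (k + 1) = A k + α (k + 1) := by
      rw [hA, hA, Finset.sum_range_succ]
    rw [hstep]
    set u : ℝ := ((k : ℝ) + p) / p with hu
    set v : ℝ := (((k + 1 : ℕ) : ℝ) + p) / p with hv
    have hu0 : 0 ≤ u := div_nonneg (by positivity) hp0.le
    have hv0 : 0 < v := by
      rw [hv]; push_cast; positivity
    have huv : u ≤ v := by
      rw [hu, hv]; push_cast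
      gcongr
      linarith
    have hvu : v - u = 1 / p := by
      rw [hu, hv]; push_cast; field_simp; ring
    have hk := key_ineq hp1 hu0 huv hv0
    rw [hvu] at hk
    have hk2 : v ^ p - u ^ p ≤ v ^ (p - 1) := by
      calc v ^ p - u ^ p ≤ p * v ^ (p - 1) * (1 / p) := hk
        _ = v ^ (p - 1) := by field_simp
    have hαk : α (k + 1) = (1 / a) * v ^ (p - 1) := by rw [hα]
    have := mul_le_mul_of_nonneg_left hk2 (by positivity : (0:ℝ) ≤ 1 / a)
    have goal : (1 / a) * v ^ p ≤ (1 / a) * u ^ p + (1 / a) * v ^ (p - 1) := by nlinarith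
    calc (1 / a) * v ^ p ≤ (1 / a) * u ^ p + (1 / a) * v ^ (p - 1) := goal
      _ ≤ A k + α (k + 1) := by
        rw [hαk]
        exact add_le_add ih le_rfl
end

section
/- Let p ∈ [1,2], a = 2^{(2p-1)/2}, α_k = (1/a)((k+p)/p)^{p-1}, B_k = a α_k², and β_k = L + (bσ/R)(k+p+1)^{(2p-1)/2} with b, σ, R > 0 and L ≥ 0. Then for every k ≥ 1: α_k² β_k ≤ B_k β_{k-1} and B_k β_{k-1} ≤ A_k β_{k-1}, where A_k = Σ_{i=0}^k α_i. -/
private lemma key_bernoulli {p x y : ℝ} (hp : 1 ≤ p) (hy : 0 < y) (hxy : y ≤ x) :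
    x ^ p ≤ y ^ p + p * x ^ (p - 1) * (x - y) := by
  have hx : 0 < x := hy.trans_le hxy
  have ht : (0:ℝ) ≤ y / x := by positivity
  have h1 : 1 + p * (y / x - 1) ≤ (1 + (y / x - 1)) ^ p :=
    one_add_mul_self_le_rpow_one_add (by linarith) hp
  have h2 : (1 : ℝ) + (y / x - 1) = y / x := by ring
  rw [h2] at h1
  have h3 : (y / x) ^ p = y ^ p / x ^ p := Real.div_rpow hy.le hx.le p
  have h4 : x ^ p = x ^ (p - 1) * x := by
    rw [← Real.rpow_add_one hx.ne' (p - 1)]; ring_nf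
  have hxp : 0 < x ^ p := Real.rpow_pos_of_pos hx p
  have h5 : x ^ p * (1 + p * (y / x - 1)) ≤ y ^ p := by
    calc x ^ p * (1 + p * (y / x - 1)) ≤ x ^ p * ((y / x) ^ p) :=
          mul_le_mul_of_nonneg_left h1 hxp.le
      _ = y ^ p := by rw [h3]; field_simp
  have h6 : x ^ p * (1 + p * (y / x - 1)) = x ^ p + p * x ^ (p - 1) * (y - x) := by
    rw [h4]; field_simp
  linarith

private lemma sum_lower {p : ℝ} (hp : 1 ≤ p) :
    ∀ k : ℕ, (((k : ℝ) + p) / p) ^ p ≤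
      ∑ i ∈ Finset.range (k + 1), (((i : ℝ) + p) / p) ^ (p - 1) := by
  have hp0 : (0:ℝ) < p := lt_of_lt_of_le one_pos hp
  intro k
  induction k with
  | zero =>
    simp only [Nat.cast_zero, zero_add, div_self hp0.ne', Real.one_rpow,
      Finset.sum_range_one, le_refl]
  | succ n ih =>
    rw [Finset.sum_range_succ]
    have hy : (0:ℝ) < ((n : ℝ) + p) / p := by positivity
    have hxy : ((n : ℝ) + p) / p ≤ ((n : ℝ) + 1 + p) / p := by gcongr; linarith
    have hkey := key_bernoulli hp hy hxy
    have hdiff : ((n : ℝ) + 1 + p) / p - ((n : ℝ) + p) / p = 1 / p := by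
      field_simp
      ring
    have hcancel : p * (((n : ℝ) + 1 + p) / p) ^ (p - 1) * (1 / p)
        = (((n : ℝ) + 1 + p) / p) ^ (p - 1) := by
      field_simp
    rw [hdiff, hcancel] at hkey
    push_cast
    linarith

open Finset in
/-- With `a = 2^((2p-1)/2)`, `α_k = (1/a)((k+p)/p)^(p-1)`, `B_k = a α_k²`,
`β_k = L + (bσ/R)(k+p+1)^((2p-1)/2)`, for every `k ≥ 1`:
`α_k² β_k ≤ B_k β_{k-1}` and `B_k β_{k-1} ≤ A_k β_{k-1}`. -/
theorem stmt_5 (p b σ R L : ℝ) (hp1 : 1 ≤ p) (hp2 : p ≤ 2)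
    (hb : 0 < b) (hσ : 0 < σ) (hR : 0 < R) (hL : 0 ≤ L)
    (a : ℝ) (haa : a = (2 : ℝ) ^ ((2 * p - 1) / 2))
    (α : ℕ → ℝ) (hα : ∀ i, α i = (1 / a) * (((i : ℝ) + p) / p) ^ (p - 1))
    (B : ℕ → ℝ) (hB : ∀ i, B i = a * (α i) ^ 2)
    (β : ℕ → ℝ) (hβ : ∀ i, β i = L + b * σ / R * ((i : ℝ) + p + 1) ^ ((2 * p - 1) / 2))
    (A : ℕ → ℝ) (hA : ∀ k, A k = ∑ i ∈ range (k + 1), α i) :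
    ∀ k : ℕ, 1 ≤ k →
      (α k) ^ 2 * β k ≤ B k * β (k - 1) ∧ B k * β (k - 1) ≤ A k * β (k - 1) := by
  have hp0 : (0:ℝ) < p := lt_of_lt_of_le one_pos hp1
  have hs : (0:ℝ) ≤ (2 * p - 1) / 2 := by linarith
  have ha0 : 0 < a := by rw [haa]; positivity
  have ha1 : 1 ≤ a := by rw [haa]; exact Real.one_le_rpow (by norm_num) hs
  have hβpos : ∀ i : ℕ, 0 ≤ β i := by
    intro i
    rw [hβ]
    have : (0:ℝ) ≤ b * σ / R * ((i : ℝ) + p + 1) ^ ((2 * p - 1) / 2) := by positivity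
    linarith
  intro k hk
  obtain ⟨m, rfl⟩ : ∃ m, k = m + 1 := ⟨k - 1, (Nat.succ_pred_eq_of_pos hk).symm⟩
  have hsub : m + 1 - 1 = m := rfl
  rw [hsub]
  -- β (m+1) ≤ a * β m
  have hβle : β (m + 1) ≤ a * β m := by
    rw [hβ, hβ]
    have hbase : ((m + 1 : ℕ) : ℝ) + p + 1 ≤ 2 * ((m : ℝ) + p + 1) := by
      push_cast; linarith [Nat.cast_nonneg (α := ℝ) m]
    have h1 : (((m + 1 : ℕ) : ℝ) + p + 1) ^ ((2 * p - 1) / 2)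
        ≤ (2 * ((m : ℝ) + p + 1)) ^ ((2 * p - 1) / 2) :=
      Real.rpow_le_rpow (by positivity) hbase hs
    have h2 : (2 * ((m : ℝ) + p + 1)) ^ ((2 * p - 1) / 2)
        = a * ((m : ℝ) + p + 1) ^ ((2 * p - 1) / 2) := by
      rw [Real.mul_rpow (by norm_num) (by positivity), haa]
    rw [h2] at h1
    have h3 : b * σ / R * (((m + 1 : ℕ) : ℝ) + p + 1) ^ ((2 * p - 1) / 2)
        ≤ b * σ / R * (a * ((m : ℝ) + p + 1) ^ ((2 * p - 1) / 2)) := by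
      apply mul_le_mul_of_nonneg_left h1 (by positivity)
    nlinarith [mul_le_mul_of_nonneg_right ha1 hL]
  constructor
  · rw [hB]
    calc α (m + 1) ^ 2 * β (m + 1) ≤ α (m + 1) ^ 2 * (a * β m) :=
          mul_le_mul_of_nonneg_left hβle (sq_nonneg _)
      _ = a * α (m + 1) ^ 2 * β m := by ring
  · -- B (m+1) ≤ A (m+1)
    have hBA : B (m + 1) ≤ A (m + 1) := by
      set x : ℝ := (((m + 1 : ℕ) : ℝ) + p) / p with hxdef
      have hx1 : (1:ℝ) ≤ x := by
        rw [hxdef, le_div_iff₀ hp0]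
        push_cast
        linarith [Nat.cast_nonneg (α := ℝ) m]
      have hx0 : (0:ℝ) < x := lt_of_lt_of_le one_pos hx1
      have hBval : B (m + 1) = (1 / a) * x ^ (2 * p - 2) := by
        have hxx : x ^ (p - 1) * x ^ (p - 1) = x ^ (2 * p - 2) := by
          rw [← Real.rpow_add hx0]; ring_nf
        rw [hB, hα, show (((m + 1 : ℕ) : ℝ) + p) / p = x from rfl, sq, ← hxx]
        field_simp
      have hstep1 : x ^ (2 * p - 2) ≤ x ^ p :=
        Real.rpow_le_rpow_of_exponent_le hx1 (by linarith)
      have hstep2 := sum_lower hp1 (m + 1)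
      have hAval : A (m + 1) = (1 / a) *
          ∑ i ∈ range (m + 1 + 1), (((i : ℝ) + p) / p) ^ (p - 1) := by
        rw [hA, Finset.mul_sum]
        exact Finset.sum_congr rfl fun i _ => hα i
      rw [hBval, hAval]
      apply mul_le_mul_of_nonneg_left _ (by positivity)
      exact hstep1.trans hstep2
    exact mul_le_mul_of_nonneg_right hBA (hβpos m)
end

section
/- Let p ∈ [1,2], a = 2^{(2p-1)/2}, α_i = (1/a)((i+p)/p)^{p-1}, B_i = aα_i², and A_k = Σ_{i=0}^k α_i. Then for all k ≥ 0 and δ ≥ 0: (δ/A_k)·Σ_{i=0}^k B_i ≤ 2^{2p-1}(((k+p)/p)^{p-1} + 1)·δ. -/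
open Finset in
/-- With the sequences of the SIGM coefficients,
`(δ/A_k)·Σ_{i=0}^k B_i ≤ 2^(2p-1)(((k+p)/p)^(p-1) + 1)·δ` for all `k ≥ 0`, `δ ≥ 0`. -/
theorem stmt_6 (p : ℝ) (hp1 : 1 ≤ p) (hp2 : p ≤ 2)
    (a : ℝ) (haa : a = (2 : ℝ) ^ ((2 * p - 1) / 2))
    (α : ℕ → ℝ) (hα : ∀ i, α i = (1 / a) * (((i : ℝ) + p) / p) ^ (p - 1))
    (B : ℕ → ℝ) (hB : ∀ i, B i = a * (α i) ^ 2)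
    (A : ℕ → ℝ) (hA : ∀ k, A k = ∑ i ∈ range (k + 1), α i)
    (δ : ℝ) (hδ : 0 ≤ δ) :
    ∀ k : ℕ, δ / A k * ∑ i ∈ range (k + 1), B i ≤
      (2 : ℝ) ^ (2 * p - 1) * ((((k : ℝ) + p) / p) ^ (p - 1) + 1) * δ := by
  intro k
  have hp0 : (0 : ℝ) < p := lt_of_lt_of_le one_pos hp1
  have ha : 0 < a := haa ▸ Real.rpow_pos_of_pos two_pos _
  have hbase : ∀ i : ℕ, (1 : ℝ) ≤ ((i : ℝ) + p) / p := by
    intro i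
    rw [le_div_iff₀ hp0]
    have : (0:ℝ) ≤ (i:ℝ) := Nat.cast_nonneg i
    linarith
  have hx : ∀ i : ℕ, 0 < (((i : ℝ) + p) / p) ^ (p - 1) := fun i =>
    Real.rpow_pos_of_pos (lt_of_lt_of_le one_pos (hbase i)) _
  have hαpos : ∀ i, 0 < α i := by
    intro i
    rw [hα]
    exact mul_pos (by positivity) (hx i)
  have hApos : 0 < A k := by
    rw [hA]
    exact Finset.sum_pos (fun i _ => hαpos i) (by simp)
  set C := (((k : ℝ) + p) / p) ^ (p - 1) with hC
  have hBsum : ∑ i ∈ range (k + 1), B i ≤ C * A k := by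
    rw [hA, Finset.mul_sum]
    apply Finset.sum_le_sum
    intro i hi
    have hik : (i : ℝ) ≤ (k : ℝ) := by
      exact_mod_cast Nat.le_of_lt_succ (Finset.mem_range.mp hi)
    have hmono : (((i : ℝ) + p) / p) ^ (p - 1) ≤ C := by
      apply Real.rpow_le_rpow (by positivity) _ (by linarith)
      exact div_le_div_of_nonneg_right (by linarith) hp0.le
    calc B i = α i * (((i : ℝ) + p) / p) ^ (p - 1) := by
          rw [hB, hα]; field_simp
      _ ≤ α i * C := mul_le_mul_of_nonneg_left hmono (hαpos i).le
      _ = C * α i := mul_comm _ _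
  have h1 : δ / A k * ∑ i ∈ range (k + 1), B i ≤ δ * C := by
    rw [div_mul_eq_mul_div, div_le_iff₀ hApos]
    calc δ * ∑ i ∈ range (k + 1), B i ≤ δ * (C * A k) :=
          mul_le_mul_of_nonneg_left hBsum hδ
      _ = δ * C * A k := by ring
  refine h1.trans ?_
  have h2 : (1 : ℝ) ≤ (2 : ℝ) ^ (2 * p - 1) := by
    calc (1 : ℝ) = (2 : ℝ) ^ (0 : ℝ) := (Real.rpow_zero 2).symm
      _ ≤ (2 : ℝ) ^ (2 * p - 1) := Real.rpow_le_rpow_of_exponent_le one_le_two (by linarith)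
  nlinarith [hx k, mul_nonneg hδ (hx k).le]
end

section
/- Let p ∈ [1,2], a = 2^{(2p-1)/2}, α_i = (1/a)((i+p)/p)^{p-1}, A_k = Σ_{i=0}^k α_i. Then for all k ≥ 0: (1/A_k²)·Σ_{i=0}^k α_i² ≤ 2p/(k+p). -/
open Finset in
private lemma key_step {p x y : ℝ} (hp : 1 ≤ p) (hy : 0 < y) (hxy : x = y + 1 / p) :
    x ^ p - x ^ (p - 1) ≤ y ^ p := by
  have hp0 : 0 < p := lt_of_lt_of_le one_pos hp
  have hx : 0 < x := by rw [hxy]; positivity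
  have hs : -1 ≤ y / x - 1 := by
    have : 0 ≤ y / x := by positivity
    linarith
  have hb := one_add_mul_self_le_rpow_one_add hs hp
  have h1 : 1 + (y / x - 1) = y / x := by ring
  rw [h1, Real.div_rpow hy.le hx.le] at hb
  have h2 : p * (y / x - 1) = -(1 / x) := by
    have hxy' : p * x - p * y = 1 := by
      rw [hxy]; field_simp; ring
    field_simp
    linarith
  rw [h2] at hb
  have hxp : 0 < x ^ p := Real.rpow_pos_of_pos hx p
  have h3 : x ^ (p - 1) = x ^ p / x := by
    rw [Real.rpow_sub hx, Real.rpow_one]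
  have h4 := mul_le_mul_of_nonneg_right hb hxp.le
  rw [div_mul_cancel₀ _ hxp.ne'] at h4
  calc x ^ p - x ^ (p - 1) = (1 + -(1 / x)) * x ^ p := by rw [h3]; ring
    _ ≤ y ^ p := h4

open Finset in
private lemma sum_ge {p : ℝ} (hp : 1 ≤ p) (k : ℕ) :
    (((k : ℝ) + p) / p) ^ p ≤ ∑ i ∈ range (k + 1), (((i : ℝ) + p) / p) ^ (p - 1) := by
  have hp0 : 0 < p := lt_of_lt_of_le one_pos hp
  induction k with
  | zero => simp [div_self hp0.ne', Real.one_rpow]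
  | succ k ih =>
    rw [Finset.sum_range_succ]
    have hy : (0 : ℝ) < ((k : ℝ) + p) / p := by positivity
    have hxy : (((k + 1 : ℕ) : ℝ) + p) / p = ((k : ℝ) + p) / p + 1 / p := by
      push_cast; field_simp; ring
    have := key_step hp hy hxy
    linarith

open Finset in
/-- With the sequences of the SIGM coefficients,
`(1/A_k²)·Σ_{i=0}^k α_i² ≤ 2p/(k+p)` for all `k ≥ 0`. -/
theorem stmt_7 (p : ℝ) (hp1 : 1 ≤ p) (hp2 : p ≤ 2)
    (a : ℝ) (haa : a = (2 : ℝ) ^ ((2 * p - 1) / 2))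
    (α : ℕ → ℝ) (hα : ∀ i, α i = (1 / a) * (((i : ℝ) + p) / p) ^ (p - 1))
    (A : ℕ → ℝ) (hA : ∀ k, A k = ∑ i ∈ range (k + 1), α i) :
    ∀ k : ℕ, 1 / (A k) ^ 2 * ∑ i ∈ range (k + 1), (α i) ^ 2 ≤
      2 * p / ((k : ℝ) + p) := by
  intro k
  have hp0 : 0 < p := lt_of_lt_of_le one_pos hp1
  have ha : 0 < a := by rw [haa]; positivity
  have hαpos : ∀ i : ℕ, 0 < α i := fun i => by
    rw [hα i]
    have : (0 : ℝ) < ((i : ℝ) + p) / p := by positivity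
    positivity
  have hApos : 0 < A k := by
    rw [hA k]
    exact Finset.sum_pos (fun i _ => hαpos i) (by simp)
  have hxk : (0 : ℝ) < ((k : ℝ) + p) / p := by positivity
  -- A k ≥ (1/a) * x_k ^ p
  have hAge : (1 / a) * (((k : ℝ) + p) / p) ^ p ≤ A k := by
    rw [hA k]
    have := sum_ge hp1 k
    calc (1 / a) * (((k : ℝ) + p) / p) ^ p
        ≤ (1 / a) * ∑ i ∈ range (k + 1), (((i : ℝ) + p) / p) ^ (p - 1) := by
          apply mul_le_mul_of_nonneg_left this (by positivity)
      _ = ∑ i ∈ range (k + 1), α i := by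
          rw [Finset.mul_sum]; exact Finset.sum_congr rfl fun i _ => (hα i).symm
  -- α i ≤ α k for i ≤ k
  have hmono : ∀ i ∈ range (k + 1), α i ≤ α k := by
    intro i hi
    rw [Finset.mem_range] at hi
    rw [hα i, hα k]
    apply mul_le_mul_of_nonneg_left _ (by positivity)
    apply Real.rpow_le_rpow (by positivity) _ (by linarith)
    have hik : (i : ℝ) ≤ (k : ℝ) := by exact_mod_cast Nat.lt_succ_iff.mp hi
    gcongr
  -- α k ≤ (p/(k+p)) * A k
  have hαk : α k ≤ p / ((k : ℝ) + p) * A k := by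
    rw [hα k]
    have h5 : (1 / a) * (((k : ℝ) + p) / p) ^ (p - 1)
        = p / ((k : ℝ) + p) * ((1 / a) * (((k : ℝ) + p) / p) ^ p) := by
      rw [Real.rpow_sub hxk, Real.rpow_one]
      have hkp : (0 : ℝ) < (k : ℝ) + p := by positivity
      field_simp
    rw [h5]
    exact mul_le_mul_of_nonneg_left hAge (by positivity)
  have hsum : ∑ i ∈ range (k + 1), (α i) ^ 2 ≤ α k * A k := by
    rw [hA k, Finset.mul_sum]
    apply Finset.sum_le_sum
    intro i hi
    nlinarith [hmono i hi, hαpos i]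
  have hkp : (0 : ℝ) < (k : ℝ) + p := by positivity
  calc 1 / (A k) ^ 2 * ∑ i ∈ range (k + 1), (α i) ^ 2
      ≤ 1 / (A k) ^ 2 * (α k * A k) := by
        exact mul_le_mul_of_nonneg_left hsum (by positivity)
    _ = α k / A k := by field_simp
    _ ≤ p / ((k : ℝ) + p) := by
        rw [div_le_iff₀ hApos]
        linarith [hαk]
    _ ≤ 2 * p / ((k : ℝ) + p) := by
        gcongr
        linarith
end

section
/- Let p ∈ [1,2], b > 0, σ > 0, R > 0, L ≥ 0, a = 2^{(2p-1)/2}, α_i = (1/a)((i+p)/p)^{p-1}, B_i = aα_i², β_i = L + (bσ/R)(i+p+1)^{(2p-1)/2}, A_k = Σ_{i=0}^k α_i. Then (σ²/A_k)·Σ_{i=0}^k B_i/(β_i - L) ≤ (σR p^{2-p}/(b(p - 1/2)))·(k+p+2)^{p-1/2}/(k+p)^p for all k ≥ 0. -/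
-- Bernoulli-type step lemmas
lemma bern1 {y p : ℝ} (hy : 0 < y) (hp : 1 ≤ p) :
    (y + 1) ^ p - y ^ p ≤ p * (y + 1) ^ (p - 1) := by
  have hy1 : (0:ℝ) < y + 1 := by linarith
  have hs : (-1:ℝ) ≤ -(1 / (y + 1)) := by
    rw [neg_le_neg_iff]
    rw [div_le_one hy1]; linarith
  have h := one_add_mul_self_le_rpow_one_add hs hp
  have hmul : ((1 : ℝ) + -(1 / (y + 1))) * (y + 1) = y := by field_simp; ring
  have hkey : (1 + -(1 / (y + 1))) ^ p * (y + 1) ^ p = y ^ p := by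
    rw [← Real.mul_rpow (by linarith [hs]) hy1.le, hmul]
  have hpos : (0:ℝ) < (y + 1) ^ p := Real.rpow_pos_of_pos hy1 p
  have h2 : (1 + p * -(1 / (y + 1))) * (y + 1) ^ p ≤ y ^ p := by
    rw [← hkey]
    exact mul_le_mul_of_nonneg_right h hpos.le
  have h3 : (y + 1) ^ (p - 1) = (y + 1) ^ p / (y + 1) := Real.rpow_sub_one hy1.ne' p
  rw [h3]
  have : (1 + p * -(1 / (y + 1))) * (y + 1) ^ p
      = (y + 1) ^ p - p * ((y + 1) ^ p / (y + 1)) := by ring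
  linarith [h2, this ▸ h2]

lemma bern2 {y q : ℝ} (hy : 0 < y) (hq0 : 0 < q) (hq1 : q ≤ 1) :
    q * (y + 1) ^ (q - 1) ≤ (y + 1) ^ q - y ^ q := by
  have hy1 : (0:ℝ) < y + 1 := by linarith
  have hs : (-1:ℝ) ≤ -(1 / (y + 1)) := by
    rw [neg_le_neg_iff]; rw [div_le_one hy1]; linarith
  have h := rpow_one_add_le_one_add_mul_self hs hq0.le hq1
  have hmul : ((1 : ℝ) + -(1 / (y + 1))) * (y + 1) = y := by field_simp; ring
  have hkey : (1 + -(1 / (y + 1))) ^ q * (y + 1) ^ q = y ^ q := by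
    rw [← Real.mul_rpow (by linarith [hs]) hy1.le, hmul]
  have hpos : (0:ℝ) < (y + 1) ^ q := Real.rpow_pos_of_pos hy1 q
  have h2 : y ^ q ≤ (1 + q * -(1 / (y + 1))) * (y + 1) ^ q := by
    rw [← hkey]
    exact mul_le_mul_of_nonneg_right h hpos.le
  have h3 : (y + 1) ^ (q - 1) = (y + 1) ^ q / (y + 1) := Real.rpow_sub_one hy1.ne' q
  rw [h3]
  have : (1 + q * -(1 / (y + 1))) * (y + 1) ^ q
      = (y + 1) ^ q - q * ((y + 1) ^ q / (y + 1)) := by ring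
  linarith [this ▸ h2]

lemma bern3 {y q : ℝ} (hy : 0 < y) (hq : 1 ≤ q) :
    q * y ^ (q - 1) ≤ (y + 1) ^ q - y ^ q := by
  have hs0 : (0:ℝ) ≤ 1 / y := by positivity
  have h := one_add_mul_self_le_rpow_one_add (by linarith : (-1:ℝ) ≤ 1 / y) hq
  have hmul : ((1 : ℝ) + 1 / y) * y = y + 1 := by field_simp
  have hkey : (1 + 1 / y) ^ q * y ^ q = (y + 1) ^ q := by
    rw [← Real.mul_rpow (by positivity) hy.le, hmul]
  have hpos : (0:ℝ) < y ^ q := Real.rpow_pos_of_pos hy q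
  have h2 : (1 + q * (1 / y)) * y ^ q ≤ (y + 1) ^ q := by
    rw [← hkey]
    exact mul_le_mul_of_nonneg_right h hpos.le
  have h3 : y ^ (q - 1) = y ^ q / y := Real.rpow_sub_one hy.ne' q
  rw [h3]
  have : (1 + q * (1 / y)) * y ^ q = y ^ q + q * (y ^ q / y) := by ring
  linarith [this ▸ h2]

open Finset in
lemma sumA (p : ℝ) (hp1 : 1 ≤ p) :
    ∀ k : ℕ, ((k : ℝ) + p) ^ p / p ≤ ∑ i ∈ range (k + 1), ((i : ℝ) + p) ^ (p - 1) := by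
  have hp0 : (0:ℝ) < p := by linarith
  intro k
  induction k with
  | zero =>
    simp only [Finset.sum_range_one, Nat.cast_zero, zero_add]
    rw [Real.rpow_sub_one hp0.ne' p]
  | succ k ih =>
    rw [Finset.sum_range_succ]
    have hy : (0:ℝ) < (k:ℝ) + p := by positivity
    have hb := bern1 hy hp1
    have h1 : ((k:ℝ) + p) ^ p ≤ (∑ i ∈ range (k + 1), ((i : ℝ) + p) ^ (p - 1)) * p :=
      (div_le_iff₀ hp0).mp ih
    have hc : ((k + 1 : ℕ) : ℝ) + p = ((k:ℝ) + p) + 1 := by push_cast; ring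
    rw [hc, div_le_iff₀ hp0]
    nlinarith [hb, h1]

open Finset in
lemma sumT (c q : ℝ) (hc : 1 ≤ c) (hq0 : 0 < q) :
    ∀ k : ℕ, ∑ i ∈ range (k + 1), ((i : ℝ) + c + 1) ^ (q - 1) ≤ ((k : ℝ) + c + 2) ^ q / q := by
  rcases le_or_gt q 1 with hq1 | hq1
  · -- q ≤ 1 : first show the stronger bound with k+c+1
    have main : ∀ k : ℕ, ∑ i ∈ range (k + 1), ((i : ℝ) + c + 1) ^ (q - 1)
        ≤ ((k : ℝ) + c + 1) ^ q / q := by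
      intro k
      induction k with
      | zero =>
        simp only [Finset.sum_range_one, Nat.cast_zero, zero_add]
        have h1 : (c + 1) ^ (q - 1) ≤ (c + 1) ^ q :=
          Real.rpow_le_rpow_of_exponent_le (by linarith) (by linarith)
        have h2 : (0:ℝ) ≤ (c + 1) ^ q := Real.rpow_nonneg (by linarith) q
        rw [le_div_iff₀ hq0]
        nlinarith
      | succ k ih =>
        rw [Finset.sum_range_succ]
        have hy : (0:ℝ) < (k:ℝ) + c + 1 := by positivity
        have hb := bern2 hy hq0 hq1
        have h1 : (∑ i ∈ range (k + 1), ((i : ℝ) + c + 1) ^ (q - 1)) * q ≤ ((k:ℝ) + c + 1) ^ q :=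
          (le_div_iff₀ hq0).mp ih
        have hc2 : ((k + 1 : ℕ) : ℝ) + c + 1 = ((k:ℝ) + c + 1) + 1 := by push_cast; ring
        rw [hc2, le_div_iff₀ hq0]
        nlinarith [hb, h1]
    intro k
    refine (main k).trans ?_
    have : ((k:ℝ) + c + 1) ^ q ≤ ((k:ℝ) + c + 2) ^ q :=
      Real.rpow_le_rpow (by positivity) (by linarith) hq0.le
    gcongr
  · -- 1 < q
    intro k
    induction k with
    | zero =>
      simp only [Finset.sum_range_one, Nat.cast_zero, zero_add]
      have hb := bern3 (by linarith : (0:ℝ) < c + 1) hq1.le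
      have h2 : (0:ℝ) ≤ (c + 1) ^ q := Real.rpow_nonneg (by linarith) q
      rw [le_div_iff₀ hq0]
      have he : (c + 1 + 1 : ℝ) = c + 2 := by ring
      rw [he] at hb
      nlinarith
    | succ k ih =>
      rw [Finset.sum_range_succ]
      have hy : (0:ℝ) < (k:ℝ) + c + 2 := by positivity
      have hb := bern3 hy hq1.le
      have h1 : (∑ i ∈ range (k + 1), ((i : ℝ) + c + 1) ^ (q - 1)) * q ≤ ((k:ℝ) + c + 2) ^ q :=
        (le_div_iff₀ hq0).mp ih
      have hc2 : ((k + 1 : ℕ) : ℝ) + c + 1 = ((k:ℝ) + c + 2) := by push_cast; ring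
      have hc3 : ((k + 1 : ℕ) : ℝ) + c + 2 = ((k:ℝ) + c + 2) + 1 := by push_cast; ring
      rw [hc2, hc3, le_div_iff₀ hq0]
      nlinarith [hb, h1]


open Finset in
/-- With the SIGM coefficients,
`(σ²/A_k)·Σ_{i=0}^k B_i/(β_i - L) ≤ (σR p^(2-p)/(b(p-1/2)))·(k+p+2)^(p-1/2)/(k+p)^p`. -/
theorem stmt_8 (p b σ R L : ℝ) (hp1 : 1 ≤ p) (hp2 : p ≤ 2)
    (hb : 0 < b) (hσ : 0 < σ) (hR : 0 < R) (hL : 0 ≤ L)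
    (a : ℝ) (haa : a = (2 : ℝ) ^ ((2 * p - 1) / 2))
    (α : ℕ → ℝ) (hα : ∀ i, α i = (1 / a) * (((i : ℝ) + p) / p) ^ (p - 1))
    (B : ℕ → ℝ) (hB : ∀ i, B i = a * (α i) ^ 2)
    (β : ℕ → ℝ) (hβ : ∀ i, β i = L + b * σ / R * ((i : ℝ) + p + 1) ^ ((2 * p - 1) / 2))
    (A : ℕ → ℝ) (hA : ∀ k, A k = ∑ i ∈ range (k + 1), α i) :
    ∀ k : ℕ, σ ^ 2 / A k * ∑ i ∈ range (k + 1), B i / (β i - L) ≤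
      σ * R * p ^ (2 - p) / (b * (p - 1 / 2)) *
        (((k : ℝ) + p + 2) ^ (p - 1 / 2) / ((k : ℝ) + p) ^ p) := by
  intro k
  have hp0 : (0:ℝ) < p := by linarith
  have ha : (0:ℝ) < a := by rw [haa]; positivity
  have hq0 : (0:ℝ) < p - 1/2 := by linarith
  have hpp : (0:ℝ) < p ^ p := Real.rpow_pos_of_pos hp0 p
  have hpp2 : (0:ℝ) < p ^ (2*p - 2) := Real.rpow_pos_of_pos hp0 _
  have hkp : (0:ℝ) < (k:ℝ) + p := by positivity
  have hkpp : (0:ℝ) < ((k:ℝ) + p) ^ p := Real.rpow_pos_of_pos hkp p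
  -- lower bound on A k
  have hAeq : A k = (1/(a * p^(p-1))) * ∑ i ∈ range (k + 1), ((i : ℝ) + p) ^ (p - 1) := by
    rw [hA, Finset.mul_sum]
    refine Finset.sum_congr rfl fun i _ => ?_
    rw [hα, Real.div_rpow (by positivity) hp0.le]
    ring
  have hppm : (0:ℝ) < p ^ (p-1) := Real.rpow_pos_of_pos hp0 _
  have hApm : p ^ (p-1) * p = p ^ p := by
    rw [Real.rpow_sub_one hp0.ne' p]; field_simp
  have hAk : (1/(a * p^p)) * ((k:ℝ)+p) ^ p ≤ A k := by
    rw [hAeq]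
    have h1 := sumA p hp1 k
    calc (1/(a * p^p)) * ((k:ℝ)+p) ^ p
        = (1/(a * p^(p-1))) * (((k:ℝ)+p) ^ p / p) := by
          rw [← hApm]; field_simp
      _ ≤ _ := by
          apply mul_le_mul_of_nonneg_left h1 (by positivity)
  have hApos : (0:ℝ) < A k := lt_of_lt_of_le (by positivity) hAk
  -- per-term bound
  have hterm : ∀ i ∈ range (k+1), B i / (β i - L)
      ≤ (R/(a*b*σ*p^(2*p-2))) * ((i:ℝ)+p+1) ^ ((p - 1/2) - 1) := by
    intro i _
    have hip : (0:ℝ) < (i:ℝ) + p := by positivity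
    have hip1 : (0:ℝ) < (i:ℝ) + p + 1 := by positivity
    have hipq : (0:ℝ) < ((i:ℝ)+p+1) ^ ((2*p-1)/2) := Real.rpow_pos_of_pos hip1 _
    have hsq : ((((i:ℝ) + p) / p) ^ (p - 1)) ^ 2 = ((i:ℝ)+p) ^ (2*p-2) / p ^ (2*p-2) := by
      rw [sq, ← Real.rpow_add (by positivity)]
      rw [show p - 1 + (p - 1) = 2*p - 2 by ring]
      rw [Real.div_rpow hip.le hp0.le]
    have e1 : B i / (β i - L)
        = (R/(a*b*σ*p^(2*p-2))) * (((i:ℝ)+p) ^ (2*p-2) / ((i:ℝ)+p+1) ^ ((2*p-1)/2)) := by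
      rw [hB, hα, hβ]
      rw [mul_pow, hsq]
      rw [add_sub_cancel_left]
      field_simp
    rw [e1]
    have h2 : ((i:ℝ)+p) ^ (2*p-2) ≤ ((i:ℝ)+p+1) ^ (2*p-2) :=
      Real.rpow_le_rpow hip.le (by linarith) (by linarith)
    have h3 : ((i:ℝ)+p+1) ^ (2*p-2) / ((i:ℝ)+p+1) ^ ((2*p-1)/2) = ((i:ℝ)+p+1) ^ ((p - 1/2) - 1) := by
      rw [← Real.rpow_sub hip1]
      congr 1; ring
    rw [← h3]
    apply mul_le_mul_of_nonneg_left _ (by positivity)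
    exact div_le_div_of_nonneg_right h2 hipq.le |>.trans_eq rfl
  have hSle : ∑ i ∈ range (k+1), B i / (β i - L)
      ≤ (R/(a*b*σ*p^(2*p-2))) * (((k:ℝ)+p+2) ^ (p - 1/2) / (p - 1/2)) := by
    calc ∑ i ∈ range (k+1), B i / (β i - L)
        ≤ ∑ i ∈ range (k+1), (R/(a*b*σ*p^(2*p-2))) * ((i:ℝ)+p+1) ^ ((p - 1/2) - 1) :=
          Finset.sum_le_sum hterm
      _ = (R/(a*b*σ*p^(2*p-2))) * ∑ i ∈ range (k+1), ((i:ℝ)+p+1) ^ ((p - 1/2) - 1) := by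
          rw [Finset.mul_sum]
      _ ≤ _ := by
          apply mul_le_mul_of_nonneg_left _ (by positivity)
          exact sumT p (p - 1/2) hp1 hq0 k
  have hS0 : (0:ℝ) ≤ ∑ i ∈ range (k+1), B i / (β i - L) := by
    apply Finset.sum_nonneg
    intro i _
    have hip1 : (0:ℝ) < (i:ℝ) + p + 1 := by positivity
    apply div_nonneg
    · rw [hB]; positivity
    · rw [hβ, add_sub_cancel_left]; positivity
  have h1 : σ^2 / A k ≤ σ^2 * (a * p^p) / ((k:ℝ)+p) ^ p := by
    rw [div_le_div_iff₀ hApos (by positivity)]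
    calc σ^2 * (((k:ℝ)+p) ^ p) = σ^2 * (a*p^p) * ((1/(a * p^p)) * ((k:ℝ)+p) ^ p) := by
          field_simp
      _ ≤ σ^2 * (a*p^p) * A k := by
          apply mul_le_mul_of_nonneg_left hAk (by positivity)
  have hmul := mul_le_mul h1 hSle hS0 (by positivity)
  refine hmul.trans_eq ?_
  have hkey : p ^ p = p ^ (2 - p) * p ^ (2*p - 2) := by
    rw [← Real.rpow_add hp0]; congr 1; ring
  rw [hkey]
  have hD : (0:ℝ) < a * b * σ * p ^ (2*p-2) := by positivity
  rw [div_mul_div_comm, div_mul_div_comm, div_mul_div_comm,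
    div_eq_div_iff (mul_pos hkpp (mul_pos hD hq0)).ne' (mul_pos (mul_pos hb hq0) hkpp).ne']
  ring
end

section
/- Let f be convex on Q with subgradient g(x) ∈ ∂f(x) satisfying the Hölder condition ‖g(x) - g(y)‖_* ≤ L_ν ‖x - y‖^ν with ν ∈ [0,1). Then for any δ > 0, the pair (f(x), g(x)) is a (δ, L)-oracle for f with L = L_ν · [L_ν(1-ν)/(2δ(1+ν))]^{(1-ν)/(1+ν)}, i.e., 0 ≤ f(y) - f(x) - ⟨g(x), y-x⟩ ≤ (L/2)‖x-y‖² + δ for all x, y ∈ Q. -/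
open Filter Finset Topology

private lemma aux_step {ν t h : ℝ} (hν : 0 ≤ ν) (ht : 0 < t) (hh : 0 ≤ h) :
    (1 + ν) * h * t ^ ν ≤ (t + h) ^ (1 + ν) - t ^ (1 + ν) := by
  have hb : 1 + (1 + ν) * (h / t) ≤ (1 + h / t) ^ (1 + ν) :=
    one_add_mul_self_le_rpow_one_add
      (by nlinarith [div_nonneg hh ht.le]) (by linarith)
  have h4 : t ^ (1 + ν) = t ^ ν * t := by rw [add_comm, Real.rpow_add_one ht.ne']
  have h1 : (t + h) ^ (1 + ν) = t ^ (1 + ν) * (1 + h / t) ^ (1 + ν) := by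
    rw [← Real.mul_rpow ht.le (by positivity)]
    congr 1
    field_simp
  have key : t ^ (1 + ν) * (1 + (1 + ν) * (h / t)) = t ^ (1 + ν) + (1 + ν) * h * t ^ ν := by
    rw [h4]; field_simp
  have h5 : t ^ (1 + ν) * (1 + (1 + ν) * (h / t)) ≤ t ^ (1 + ν) * (1 + h / t) ^ (1 + ν) :=
    mul_le_mul_of_nonneg_left hb (Real.rpow_nonneg ht.le _)
  rw [h1]; linarith [key, h5]


private lemma aux_sum {ν : ℝ} (hν : 0 ≤ ν) (n : ℕ) (hn : 1 ≤ n) :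
    (1 + ν) * ∑ i ∈ Finset.range n, (1 : ℝ) / n * (((i : ℝ) + 1) / n) ^ ν
      ≤ (((n : ℝ) + 1) / n) ^ (1 + ν) := by
  have hn0 : (0 : ℝ) < n := by exact_mod_cast hn
  set u : ℕ → ℝ := fun i => (((i : ℝ) + 1) / n) ^ (1 + ν) with hu
  have hstep : ∀ i ∈ Finset.range n,
      (1 + ν) * ((1 : ℝ) / n * (((i : ℝ) + 1) / n) ^ ν) ≤ u (i + 1) - u i := by
    intro i _
    have h := aux_step (t := ((i : ℝ) + 1) / n) (h := 1 / n) hν (by positivity) (by positivity)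
    rw [hu]
    simp only []
    push_cast
    calc (1 + ν) * ((1 : ℝ) / n * (((i : ℝ) + 1) / n) ^ ν)
        = (1 + ν) * (1 / n) * (((i : ℝ) + 1) / n) ^ ν := by ring
      _ ≤ (((i : ℝ) + 1) / n + 1 / n) ^ (1 + ν) - (((i : ℝ) + 1) / n) ^ (1 + ν) := h
      _ = (((i : ℝ) + 1 + 1) / n) ^ (1 + ν) - (((i : ℝ) + 1) / n) ^ (1 + ν) := by
          congr 2; ring
  calc (1 + ν) * ∑ i ∈ Finset.range n, (1 : ℝ) / n * (((i : ℝ) + 1) / n) ^ ν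
      = ∑ i ∈ Finset.range n, (1 + ν) * ((1 : ℝ) / n * (((i : ℝ) + 1) / n) ^ ν) := by
        rw [Finset.mul_sum]
    _ ≤ ∑ i ∈ Finset.range n, (u (i + 1) - u i) := Finset.sum_le_sum hstep
    _ = u n - u 0 := Finset.sum_range_sub u n
    _ ≤ u n := by
        have : (0 : ℝ) ≤ u 0 := Real.rpow_nonneg (by positivity) _
        linarith
    _ = (((n : ℝ) + 1) / n) ^ (1 + ν) := rfl


private lemma aux_young {ν Lν δ L t : ℝ} (hν0 : 0 ≤ ν) (hν1 : ν < 1) (hLν : 0 < Lν) (hδ : 0 < δ)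
    (hLdef : L = Lν * (Lν * (1 - ν) / (2 * δ * (1 + ν))) ^ ((1 - ν) / (1 + ν))) (ht : 0 ≤ t) :
    Lν / (1 + ν) * t ^ (1 + ν) ≤ L / 2 * t ^ 2 + δ := by
  have hν2 : (0 : ℝ) < 1 + ν := by linarith
  have hν3 : (0 : ℝ) < 1 - ν := by linarith
  set M : ℝ := Lν / (1 + ν) with hM
  set W : ℝ := 2 * δ / (1 - ν) with hW
  set θ : ℝ := (1 + ν) / 2 with hθ
  have hMpos : 0 < M := by positivity
  have hWpos : 0 < W := by positivity
  have hθpos : 0 < θ := by positivity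
  have hθ1 : θ ≤ 1 := by rw [hθ]; linarith
  have hK : Lν * (1 - ν) / (2 * δ * (1 + ν)) = M / W := by
    rw [hM, hW]; field_simp
  have hL1 : L / (1 + ν) = M * (M / W) ^ ((1 - ν) / (1 + ν)) := by
    rw [hLdef, hK, hM]; ring
  have hLpos : 0 < L := by
    have h1 : (0 : ℝ) < Lν * (1 - ν) / (2 * δ * (1 + ν)) := by positivity
    rw [hLdef]
    positivity
  -- key identity
  have key : (L / (1 + ν)) ^ θ * W ^ (1 - θ) = M := by
    have hMW : (0 : ℝ) ≤ M / W := by positivity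
    have e1 : (1 - ν) / (1 + ν) * θ = (1 - ν) / 2 := by
      rw [hθ]; field_simp
    have e2 : 1 - θ = (1 - ν) / 2 := by rw [hθ]; ring
    calc (L / (1 + ν)) ^ θ * W ^ (1 - θ)
        = (M * (M / W) ^ ((1 - ν) / (1 + ν))) ^ θ * W ^ ((1 - ν) / 2) := by rw [hL1, e2]
      _ = M ^ θ * ((M / W) ^ ((1 - ν) / (1 + ν))) ^ θ * W ^ ((1 - ν) / 2) := by
          rw [Real.mul_rpow hMpos.le (Real.rpow_nonneg hMW _)]
      _ = M ^ θ * (M / W) ^ ((1 - ν) / 2) * W ^ ((1 - ν) / 2) := by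
          rw [← Real.rpow_mul hMW, e1]
      _ = M ^ θ * (M ^ ((1 - ν) / 2) / W ^ ((1 - ν) / 2)) * W ^ ((1 - ν) / 2) := by
          rw [Real.div_rpow hMpos.le hWpos.le]
      _ = M ^ θ * M ^ ((1 - ν) / 2) := by
          have : W ^ ((1 - ν) / 2) ≠ 0 := (Real.rpow_pos_of_pos hWpos _).ne'
          field_simp
      _ = M ^ (θ + (1 - ν) / 2) := (Real.rpow_add hMpos _ _).symm
      _ = M := by
          have : θ + (1 - ν) / 2 = 1 := by rw [hθ]; ring
          rw [this, Real.rpow_one]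
  have hgm := Real.geom_mean_le_arith_mean2_weighted hθpos.le (by linarith : (0:ℝ) ≤ 1 - θ)
    (by positivity : (0:ℝ) ≤ L / (1 + ν) * t ^ 2) hWpos.le (by ring)
  have lhs_eq : (L / (1 + ν) * t ^ 2) ^ θ * W ^ (1 - θ) = M * t ^ (1 + ν) := by
    have ht2 : (t ^ 2 : ℝ) ^ θ = t ^ (1 + ν) := by
      rw [← Real.rpow_natCast t 2, ← Real.rpow_mul ht]
      norm_num [hθ]
      congr 1
      ring
    rw [Real.mul_rpow (by positivity) (by positivity), ht2]
    rw [mul_right_comm, key]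
  have rhs_eq : θ * (L / (1 + ν) * t ^ 2) + (1 - θ) * W = L / 2 * t ^ 2 + δ := by
    rw [hθ, hW]; field_simp; ring
  calc Lν / (1 + ν) * t ^ (1 + ν) = M * t ^ (1 + ν) := by rw [hM]
    _ = (L / (1 + ν) * t ^ 2) ^ θ * W ^ (1 - θ) := lhs_eq.symm
    _ ≤ θ * (L / (1 + ν) * t ^ 2) + (1 - θ) * W := hgm
    _ = L / 2 * t ^ 2 + δ := rhs_eq


/-- A convex function with `ν`-Hölder continuous subgradients admits,
for any `δ > 0`, a `(δ, L)`-oracle with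
`L = L_ν (L_ν(1-ν)/(2δ(1+ν)))^((1-ν)/(1+ν))`. -/
theorem stmt_11 {E : Type*} [NormedAddCommGroup E] [NormedSpace ℝ E]
    [FiniteDimensional ℝ E] (Q : Set E) (hQc : IsClosed Q) (hQ : Convex ℝ Q)
    (f : E → ℝ) (g : E → (E →L[ℝ] ℝ))
    (hsub : ∀ x ∈ Q, ∀ y ∈ Q, f y ≥ f x + g x (y - x))
    (ν Lν : ℝ) (hν0 : 0 ≤ ν) (hν1 : ν < 1) (hLν : 0 < Lν)
    (hHolder : ∀ x ∈ Q, ∀ y ∈ Q, ‖g x - g y‖ ≤ Lν * ‖x - y‖ ^ ν)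
    (δ : ℝ) (hδ : 0 < δ)
    (L : ℝ) (hLdef : L = Lν * (Lν * (1 - ν) / (2 * δ * (1 + ν))) ^ ((1 - ν) / (1 + ν))) :
    ∀ x ∈ Q, ∀ y ∈ Q,
      0 ≤ f y - f x - g x (y - x) ∧
      f y - f x - g x (y - x) ≤ L / 2 * ‖x - y‖ ^ 2 + δ := by
  intro x hx y hy
  have hlow := hsub x hx y hy
  have hν2 : (0 : ℝ) < 1 + ν := by linarith
  refine ⟨by linarith, ?_⟩
  set t : ℝ := ‖y - x‖ with htdef
  set D : ℝ := f y - f x - g x (y - x) with hD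
  -- Step 1: per-partition bound
  have main : ∀ n : ℕ, 1 ≤ n →
      D ≤ Lν * (t ^ ν * t) * ((((n : ℝ) + 1) / n) ^ (1 + ν)) / (1 + ν) := by
    intro n hn
    have hn0 : (0 : ℝ) < n := by exact_mod_cast hn
    set z : ℕ → E := fun i => x + ((i : ℝ) / n) • (y - x) with hz
    have hzQ : ∀ i : ℕ, i ≤ n → z i ∈ Q := by
      intro i hi
      have h1 : (0 : ℝ) ≤ (i : ℝ) / n := by positivity
      have h2 : (i : ℝ) / n ≤ 1 := by
        rw [div_le_one hn0]; exact_mod_cast hi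
      have h3 := hQ hx hy (by linarith : (0 : ℝ) ≤ 1 - (i : ℝ) / n) h1 (by ring)
      have h4 : (1 - (i : ℝ) / n) • x + ((i : ℝ) / n) • y = z i := by
        rw [hz]; simp only []
        rw [sub_smul, one_smul, smul_sub]; abel
      rwa [h4] at h3
    have hz0 : z 0 = x := by simp [hz]
    have hzn : z n = y := by
      rw [hz]; simp only []
      rw [div_self hn0.ne', one_smul]
      abel
    have tel : f y - f x = ∑ i ∈ Finset.range n, (f (z (i + 1)) - f (z i)) := by
      rw [Finset.sum_range_sub (fun i => f (z i)) n, hz0, hzn]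
    have bound : ∀ i ∈ Finset.range n, f (z (i + 1)) - f (z i) ≤
        (1 / n) * (g x (y - x)) + Lν * (t ^ ν * t) * ((1 : ℝ) / n * (((i : ℝ) + 1) / n) ^ ν) := by
      intro i hi
      have hi' : i + 1 ≤ n := Finset.mem_range.mp hi
      have hz1 : z (i + 1) ∈ Q := hzQ _ hi'
      have hzi : z i ∈ Q := hzQ _ (by omega)
      have hdiff : z (i + 1) - z i = ((1 : ℝ) / n) • (y - x) := by
        have e : ((i + 1 : ℕ) : ℝ) / n - (i : ℝ) / n = 1 / n := by push_cast; ring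
        rw [hz]; simp only []
        rw [add_sub_add_left_eq_sub, ← sub_smul, e]
      have hsub' := hsub (z (i + 1)) hz1 (z i) hzi
      have h2 : g (z (i + 1)) (z i - z (i + 1)) = -(g (z (i + 1)) (z (i + 1) - z i)) := by
        rw [← map_neg, neg_sub]
      have hstep1 : f (z (i + 1)) - f (z i) ≤ g (z (i + 1)) (z (i + 1) - z i) := by
        rw [h2] at hsub'; linarith
      have happ : g (z (i + 1)) (z (i + 1) - z i) = (1 / n) * (g (z (i + 1)) (y - x)) := by
        rw [hdiff, map_smul, smul_eq_mul]
      have hsplit : g (z (i + 1)) (y - x) =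
          g x (y - x) + (g (z (i + 1)) - g x) (y - x) := by
        rw [ContinuousLinearMap.sub_apply]; ring
      have hnorm : ‖z (i + 1) - x‖ = (((i : ℝ) + 1) / n) * t := by
        have e : z (i + 1) - x = (((i + 1 : ℕ) : ℝ) / n) • (y - x) := by
          rw [hz]; simp only []
          rw [add_sub_cancel_left]
        rw [e, norm_smul, Real.norm_eq_abs, abs_of_nonneg (by positivity)]
        push_cast; rw [htdef]
      have c1 : (g (z (i + 1)) - g x) (y - x) ≤ Lν * (((i : ℝ) + 1) / n) ^ ν * (t ^ ν * t) := by
        calc (g (z (i + 1)) - g x) (y - x)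
            ≤ ‖g (z (i + 1)) - g x‖ * ‖y - x‖ := by
              refine le_trans (le_abs_self _) ?_
              rw [← Real.norm_eq_abs]
              exact (g (z (i + 1)) - g x).le_opNorm _
          _ ≤ (Lν * ‖z (i + 1) - x‖ ^ ν) * t := by
              rw [← htdef]
              exact mul_le_mul_of_nonneg_right (hHolder _ hz1 x hx) (norm_nonneg _)
          _ = Lν * (((i : ℝ) + 1) / n) ^ ν * (t ^ ν * t) := by
              rw [hnorm, Real.mul_rpow (by positivity) (by rw [htdef]; positivity)]
              ring
      have hg1 : g (z (i + 1)) (y - x) ≤ g x (y - x) + Lν * (((i : ℝ) + 1) / n) ^ ν * (t ^ ν * t) := by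
        rw [hsplit]; linarith
      calc f (z (i + 1)) - f (z i) ≤ (1 / n) * (g (z (i + 1)) (y - x)) := by
            rw [← happ]; exact hstep1
        _ ≤ (1 / n) * (g x (y - x) + Lν * (((i : ℝ) + 1) / n) ^ ν * (t ^ ν * t)) :=
            mul_le_mul_of_nonneg_left hg1 (by positivity)
        _ = (1 / n) * (g x (y - x)) + Lν * (t ^ ν * t) * ((1 : ℝ) / n * (((i : ℝ) + 1) / n) ^ ν) := by
            ring
    have hsumle : f y - f x ≤ g x (y - x) +
        Lν * (t ^ ν * t) * ∑ i ∈ Finset.range n, (1 : ℝ) / n * (((i : ℝ) + 1) / n) ^ ν := by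
      rw [tel]
      calc ∑ i ∈ Finset.range n, (f (z (i + 1)) - f (z i))
          ≤ ∑ i ∈ Finset.range n, ((1 / n) * (g x (y - x)) +
              Lν * (t ^ ν * t) * ((1 : ℝ) / n * (((i : ℝ) + 1) / n) ^ ν)) :=
            Finset.sum_le_sum bound
        _ = g x (y - x) +
            Lν * (t ^ ν * t) * ∑ i ∈ Finset.range n, (1 : ℝ) / n * (((i : ℝ) + 1) / n) ^ ν := by
            rw [Finset.sum_add_distrib, Finset.sum_const, Finset.card_range, nsmul_eq_mul,
              ← Finset.mul_sum]
            congr 1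
            field_simp
    have hS : ∑ i ∈ Finset.range n, (1 : ℝ) / n * (((i : ℝ) + 1) / n) ^ ν ≤
        (((n : ℝ) + 1) / n) ^ (1 + ν) / (1 + ν) := by
      rw [le_div_iff₀ hν2]
      calc (∑ i ∈ Finset.range n, (1 : ℝ) / n * (((i : ℝ) + 1) / n) ^ ν) * (1 + ν)
          = (1 + ν) * ∑ i ∈ Finset.range n, (1 : ℝ) / n * (((i : ℝ) + 1) / n) ^ ν := by ring
        _ ≤ (((n : ℝ) + 1) / n) ^ (1 + ν) := aux_sum hν0 n hn
    have hC : (0 : ℝ) ≤ Lν * (t ^ ν * t) := by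
      have : (0 : ℝ) ≤ t := by rw [htdef]; positivity
      positivity
    calc D = f y - f x - g x (y - x) := hD
      _ ≤ Lν * (t ^ ν * t) * ∑ i ∈ Finset.range n, (1 : ℝ) / n * (((i : ℝ) + 1) / n) ^ ν := by
          linarith
      _ ≤ Lν * (t ^ ν * t) * ((((n : ℝ) + 1) / n) ^ (1 + ν) / (1 + ν)) :=
          mul_le_mul_of_nonneg_left hS hC
      _ = Lν * (t ^ ν * t) * ((((n : ℝ) + 1) / n) ^ (1 + ν)) / (1 + ν) := by ring
  -- Step 2: take the limit n → ∞
  have hlim : Tendsto (fun n : ℕ => Lν * (t ^ ν * t) * ((((n : ℝ) + 1) / n) ^ (1 + ν)) / (1 + ν))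
      atTop (𝓝 (Lν * (t ^ ν * t) * 1 / (1 + ν))) := by
    have h1 : Tendsto (fun n : ℕ => ((n : ℝ) + 1) / n) atTop (𝓝 1) := by
      have h0 : Tendsto (fun n : ℕ => 1 + 1 / (n : ℝ)) atTop (𝓝 (1 + 0)) :=
        tendsto_const_nhds.add tendsto_one_div_atTop_nhds_zero_nat
      rw [add_zero] at h0
      refine h0.congr' ?_
      filter_upwards [eventually_ge_atTop 1] with n hn
      have hn0 : (0 : ℝ) < n := by exact_mod_cast hn
      field_simp
    have h2 : Tendsto (fun n : ℕ => (((n : ℝ) + 1) / n) ^ (1 + ν)) atTop (𝓝 1) := by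
      have := h1.rpow_const (p := 1 + ν) (Or.inr (by linarith))
      rwa [Real.one_rpow] at this
    exact ((h2.const_mul _).div_const _)
  have hDle : D ≤ Lν * (t ^ ν * t) * 1 / (1 + ν) := by
    refine ge_of_tendsto hlim ?_
    filter_upwards [eventually_ge_atTop 1] with n hn using main n hn
  have htν : t ^ ν * t = t ^ (1 + ν) := by
    rcases eq_or_ne t 0 with h0 | h0
    · rw [h0, Real.zero_rpow hν2.ne', mul_zero]
    · rw [add_comm, Real.rpow_add_one h0]
  have hfinal : D ≤ Lν / (1 + ν) * t ^ (1 + ν) := by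
    have e : Lν * (t ^ ν * t) * 1 / (1 + ν) = Lν / (1 + ν) * (t ^ ν * t) := by ring
    rw [← htν]
    linarith [hDle, e.le]
  have ht0 : (0 : ℝ) ≤ t := by rw [htdef]; positivity
  have hyoung := aux_young hν0 hν1 hLν hδ hLdef ht0
  have hxy : ‖x - y‖ = t := by rw [htdef, norm_sub_rev]
  rw [hxy]
  linarith
end
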